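/- For every divergence-free mean-zero vector field u in the Sobolev space H^{3/2} on the 3-torus, the functional Φ(u) = (∫ (u·∇)curl^{-1}u · u dx) / ∫|u|² dx (set to 0 when u=0) satisfies |Φ(u)| ≤ c‖u‖_{H^{3/2}} for a constant c independent of u. -/

import Mathlib

open MeasureTheory

noncomputable section

abbrev Z3 := Fin 3 → ℤ
abbrev C3 := Fin 3 → ℂ

/-- squared euclidean norm of a frequency vector -/
def knormSq (k : Z3) : ℝ := ∑ i, ((k i : ℝ))^2

def knorm (k : Z3) : ℝ := Real.sqrt (knormSq k)

/-- squared Sobolev H^s norm via Fourier coefficients -/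
def sobNormSq (s : ℝ) (c : Z3 → C3) : ℝ :=
  ∑' k : Z3, (knorm k) ^ (2*s) * (∑ i, ‖c k i‖ ^ 2)

def sobNorm (s : ℝ) (c : Z3 → C3) : ℝ := Real.sqrt (sobNormSq s c)

def MeanZero (c : Z3 → C3) : Prop := c 0 = 0

def DivFree (c : Z3 → C3) : Prop := ∀ k, (∑ i, (k i : ℂ) * c k i) = 0

def kcross (k : Z3) (v : C3) : C3 :=
  ![ (k 1 : ℂ) * v 2 - (k 2 : ℂ) * v 1,
     (k 2 : ℂ) * v 0 - (k 0 : ℂ) * v 2,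
     (k 0 : ℂ) * v 1 - (k 1 : ℂ) * v 0 ]

/-- Fourier coefficients of curl⁻¹ : (curl⁻¹ω)^(k) = i (k × ω̂(k))/|k|² -/
def curlInv (c : Z3 → C3) : Z3 → C3 :=
  fun k => if k = 0 then 0 else (Complex.I / (knormSq k : ℂ)) • kcross k (c k)

/-- Ψ(y₁,y₂,y₃) = ∫_{T³} (y₁,∇)curl⁻¹y₂ · y₃ dx, written via Fourier series:
the product of three Fourier series integrated over T³ picks out frequencies
k + l + m = 0, with the gradient contributing the factor i·l. -/
def Psi (c1 c2 c3 : Z3 → C3) : ℂ :=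
  (2*Real.pi)^3 * ∑' p : Z3 × Z3,
    (∑ i, c1 p.1 i * (Complex.I * ((p.2 i : ℤ) : ℂ))) *
    (∑ i, curlInv c2 p.2 i * c3 (-(p.1 + p.2)) i)

/-- Φ(u) = Ψ(u,u,u)/∫|u|², with ∫_{T³}|u|² = (2π)³ ∑_k |û(k)|².  Φ(0)=0. -/
def Phi (c : Z3 → C3) : ℂ :=
  if sobNormSq 0 c = 0 then 0
  else Psi c c c / (((2*Real.pi)^3 * sobNormSq 0 c : ℝ) : ℂ)

/-- heat semigroup S(t;·) on Fourier coefficients -/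
def heat (t : ℝ) (c : Z3 → C3) : Z3 → C3 :=
  fun k i => c k i * Complex.exp (-(knormSq k) * t)


open scoped ENNReal NNReal

/- ## auxiliary lemmas -/

lemma knormSq_nonneg (k : Z3) : 0 ≤ knormSq k :=
  Finset.sum_nonneg fun _ _ => sq_nonneg _

lemma knorm_nonneg (k : Z3) : 0 ≤ knorm k := Real.sqrt_nonneg _

lemma knorm_sq (k : Z3) : knorm k ^ 2 = knormSq k := Real.sq_sqrt (knormSq_nonneg k)

lemma coord_sq_le_knormSq (k : Z3) (i : Fin 3) : ((k i:ℝ))^2 ≤ knormSq k := by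
  rw [knormSq]
  exact Finset.single_le_sum (f := fun j => ((k j:ℝ))^2) (fun j _ => sq_nonneg _)
    (Finset.mem_univ i)

lemma one_le_knormSq {k : Z3} (hk : k ≠ 0) : 1 ≤ knormSq k := by
  obtain ⟨i, hi⟩ : ∃ i, k i ≠ 0 := by
    by_contra h
    push_neg at h
    exact hk (funext h)
  have h1 : (1:ℝ) ≤ ((k i:ℝ))^2 := by
    have : (1:ℤ) ≤ (k i)^2 := by rcases lt_or_gt_of_ne hi with h|h <;> nlinarith
    exact_mod_cast this
  exact h1.trans (coord_sq_le_knormSq k i)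

lemma one_le_knorm {k : Z3} (hk : k ≠ 0) : 1 ≤ knorm k := by
  rw [show (1:ℝ) = Real.sqrt 1 by simp]
  exact Real.sqrt_le_sqrt (one_le_knormSq hk)

lemma abs_coord_le_knorm (k : Z3) (i : Fin 3) : |(k i : ℝ)| ≤ knorm k := by
  calc |(k i:ℝ)| = Real.sqrt (((k i:ℝ))^2) := (Real.sqrt_sq_eq_abs _).symm
    _ ≤ knorm k := Real.sqrt_le_sqrt (coord_sq_le_knormSq k i)

/-- ℓ¹ norm of the coefficient vector at frequency k -/
noncomputable def anorm (u : Z3 → C3) (k : Z3) : ℝ := ∑ i, ‖u k i‖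

lemma anorm_nonneg (u : Z3 → C3) (k : Z3) : 0 ≤ anorm u k :=
  Finset.sum_nonneg fun _ _ => (norm_nonneg _)

lemma abs_le_anorm (u : Z3 → C3) (k : Z3) (i : Fin 3) : ‖u k i‖ ≤ anorm u k :=
  Finset.single_le_sum (f := fun j => ‖u k j‖) (fun j _ => norm_nonneg _)
    (Finset.mem_univ i)

lemma kcross_comp_le (k : Z3) (v : C3) (i : Fin 3) :
    ‖kcross k v i‖ ≤ knorm k * (∑ j, ‖v j‖) := by
  have hc : ∀ (a b : Fin 3) (c d : Fin 3), b ≠ d →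
      ‖(k a : ℂ) * v b - (k c : ℂ) * v d‖
        ≤ knorm k * (∑ j, ‖v j‖) := by
    intro a b c d hbd
    have h1 : ‖(k a : ℂ) * v b - (k c : ℂ) * v d‖
        ≤ ‖(k a : ℂ)‖ * ‖v b‖
          + ‖(k c : ℂ)‖ * ‖v d‖ := by
      calc _ ≤ ‖(k a : ℂ) * v b‖ + ‖(k c : ℂ) * v d‖ :=
             norm_sub_le _ _
        _ = _ := by simp [map_mul]
    have hka : ‖(k a : ℂ)‖ ≤ knorm k := by
      rw [show ((k a : ℂ)) = ((k a : ℝ) : ℂ) by push_cast; ring]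
      rw [Complex.norm_real, Real.norm_eq_abs]
      exact abs_coord_le_knorm k a
    have hkc : ‖(k c : ℂ)‖ ≤ knorm k := by
      rw [show ((k c : ℂ)) = ((k c : ℝ) : ℂ) by push_cast; ring]
      rw [Complex.norm_real, Real.norm_eq_abs]
      exact abs_coord_le_knorm k c
    have hvb : ‖v b‖ + ‖v d‖ ≤ ∑ j, ‖v j‖ := by
      rw [← Finset.sum_pair (f := fun j => ‖v j‖) hbd]
      exact Finset.sum_le_sum_of_subset_of_nonneg (Finset.subset_univ _)
        (fun j _ _ => norm_nonneg _)
    calc ‖(k a : ℂ) * v b - (k c : ℂ) * v d‖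
        ≤ ‖(k a : ℂ)‖ * ‖v b‖
          + ‖(k c : ℂ)‖ * ‖v d‖ := h1
      _ ≤ knorm k * ‖v b‖ + knorm k * ‖v d‖ :=
          add_le_add (mul_le_mul_of_nonneg_right hka (norm_nonneg _))
            (mul_le_mul_of_nonneg_right hkc (norm_nonneg _))
      _ = knorm k * (‖v b‖ + ‖v d‖) := by ring
      _ ≤ knorm k * (∑ j, ‖v j‖) :=
          mul_le_mul_of_nonneg_left hvb (knorm_nonneg k)
  fin_cases i
  · simpa [kcross] using hc 1 2 2 1 (by decide)
  · simpa [kcross] using hc 2 0 0 2 (by decide)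
  · simpa [kcross] using hc 0 1 1 0 (by decide)

lemma curlInv_comp_le (u : Z3 → C3) {l : Z3} (hl : l ≠ 0) (i : Fin 3) :
    ‖curlInv u l i‖ ≤ anorm u l / knorm l := by
  have hk1 : 1 ≤ knorm l := one_le_knorm hl
  have hkpos : 0 < knorm l := lt_of_lt_of_le one_pos hk1
  have hksq : 0 < knormSq l := by rw [← knorm_sq]; positivity
  have h1 : curlInv u l i = (Complex.I / (knormSq l : ℂ)) * kcross l (u l) i := by
    simp [curlInv, hl]
  rw [h1, norm_mul, norm_div, Complex.norm_I, Complex.norm_real, Real.norm_eq_abs, abs_of_pos hksq]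
  calc 1 / knormSq l * ‖kcross l (u l) i‖
      ≤ 1 / knormSq l * (knorm l * (∑ j, ‖u l j‖)) := by
        apply mul_le_mul_of_nonneg_left (kcross_comp_le l (u l) i)
        positivity
    _ = anorm u l / knorm l := by
        rw [← knorm_sq, anorm]
        field_simp

lemma term_bound (u : Z3 → C3) (p : Z3 × Z3) :
    ‖(∑ i, u p.1 i * (Complex.I * ((p.2 i : ℤ) : ℂ))) *
      (∑ i, curlInv u p.2 i * u (-(p.1 + p.2)) i)‖
    ≤ anorm u p.1 * anorm u p.2 * anorm u (-(p.1 + p.2)) := by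
  obtain ⟨k, l⟩ := p
  simp only
  by_cases hl : l = 0
  · have : (∑ i, u k i * (Complex.I * ((l i : ℤ) : ℂ))) = 0 := by
      subst hl
      simp
    rw [this, zero_mul, norm_zero]
    have := anorm_nonneg u k; have := anorm_nonneg u l; have := anorm_nonneg u (-(k+l))
    positivity
  · have hk1 : 1 ≤ knorm l := one_le_knorm hl
    have hkpos : 0 < knorm l := lt_of_lt_of_le one_pos hk1
    rw [norm_mul]
    have hfirst : ‖∑ i, u k i * (Complex.I * ((l i : ℤ) : ℂ))‖
        ≤ anorm u k * knorm l := by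
      calc ‖∑ i, u k i * (Complex.I * ((l i : ℤ) : ℂ))‖
          ≤ ∑ i, ‖u k i * (Complex.I * ((l i : ℤ) : ℂ))‖ :=
            norm_sum_le _ _
        _ ≤ ∑ i, ‖u k i‖ * knorm l := by
            apply Finset.sum_le_sum
            intro i _
            rw [norm_mul, norm_mul, Complex.norm_I, one_mul]
            apply mul_le_mul_of_nonneg_left _ (norm_nonneg _)
            rw [show ((l i : ℂ)) = ((l i : ℝ) : ℂ) by push_cast; ring, Complex.norm_real, Real.norm_eq_abs]
            exact abs_coord_le_knorm l i
        _ = anorm u k * knorm l := by rw [anorm, ← Finset.sum_mul]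
    have hsecond : ‖∑ i, curlInv u l i * u (-(k + l)) i‖
        ≤ (anorm u l / knorm l) * anorm u (-(k + l)) := by
      calc ‖∑ i, curlInv u l i * u (-(k + l)) i‖
          ≤ ∑ i, ‖curlInv u l i * u (-(k + l)) i‖ :=
            norm_sum_le _ _
        _ ≤ ∑ i, (anorm u l / knorm l) * ‖u (-(k + l)) i‖ := by
            apply Finset.sum_le_sum
            intro i _
            rw [norm_mul]
            exact mul_le_mul_of_nonneg_right (curlInv_comp_le u hl i) (norm_nonneg _)
        _ = (anorm u l / knorm l) * anorm u (-(k + l)) := by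
            simp only [anorm, ← Finset.mul_sum]
    calc ‖∑ i, u k i * (Complex.I * ((l i : ℤ) : ℂ))‖ *
          ‖∑ i, curlInv u l i * u (-(k + l)) i‖
        ≤ (anorm u k * knorm l) * ((anorm u l / knorm l) * anorm u (-(k + l))) := by
          apply mul_le_mul hfirst hsecond (norm_nonneg _)
          have := anorm_nonneg u k
          positivity
      _ = anorm u k * anorm u l * anorm u (-(k + l)) := by
          field_simp

lemma ennreal_amgm (x y ε : ℝ≥0∞) (h0 : ε ≠ 0) (ht : ε ≠ ⊤) :
    x * y ≤ ε * x^2 + ε⁻¹ * y^2 := by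
  rcases le_total x (ε⁻¹ * y) with h | h
  · calc x*y ≤ (ε⁻¹*y)*y := mul_le_mul_left h _
      _ = ε⁻¹*y^2 := by ring
      _ ≤ ε*x^2 + ε⁻¹*y^2 := le_add_self
  · have h' : y ≤ ε * x := by
      calc y = ε * (ε⁻¹ * y) := by rw [← mul_assoc, ENNReal.mul_inv_cancel h0 ht, one_mul]
        _ ≤ ε * x := mul_le_mul_right h _
    calc x*y ≤ x*(ε*x) := mul_le_mul_right h' _
      _ = ε*x^2 := by ring
      _ ≤ _ := le_self_add

lemma counting {R : ℝ} (hR : 1 ≤ R) :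
    ∑' k : Z3, (if knorm k ≤ R then (1:ℝ≥0∞) else 0) ≤ ENNReal.ofReal (27 * R^3) := by
  set N : ℤ := ⌊R⌋ with hN
  have hN1 : 1 ≤ N := by
    rw [hN]
    exact_mod_cast Int.le_floor.2 (by exact_mod_cast hR)
  set T : Finset Z3 := Fintype.piFinset (fun _ => Finset.Icc (-N) N) with hT
  have hout : ∀ k ∉ T, (if knorm k ≤ R then (1:ℝ≥0∞) else 0) = 0 := by
    intro k hk
    rw [if_neg]
    intro hle
    apply hk
    rw [hT, Fintype.mem_piFinset]
    intro i
    rw [Finset.mem_Icc]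
    have h1 : |(k i : ℝ)| ≤ R := (abs_coord_le_knorm k i).trans hle
    have h3 : |k i| ≤ N := Int.le_floor.2 (by push_cast; exact h1)
    exact abs_le.1 h3
  rw [tsum_eq_sum hout]
  have hle1 : (∑ k ∈ T, (if knorm k ≤ R then (1:ℝ≥0∞) else 0)) ≤ ∑ _k ∈ T, (1:ℝ≥0∞) :=
    Finset.sum_le_sum (fun k _ => by split <;> simp)
  have hcard : (T.card : ℝ≥0∞) ≤ ENNReal.ofReal (27 * R^3) := by
    have hc : T.card = ((2*N+1).toNat)^3 := by
      rw [hT, Fintype.card_piFinset]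
      simp [Int.card_Icc]
      ring_nf
    have hcr : ((T.card : ℕ) : ℝ) ≤ 27 * R^3 := by
      rw [hc]
      push_cast
      have h1 : (((2*N+1).toNat : ℤ) : ℝ) = ((2*N+1 : ℤ) : ℝ) := by
        congr 1
        exact Int.toNat_of_nonneg (by omega)
      have h2 : (((2*N+1).toNat : ℤ) : ℝ) = (((2*N+1).toNat : ℕ) : ℝ) := by push_cast; ring
      have h3 : (((2*N+1).toNat : ℕ) : ℝ) = 2*(N:ℝ)+1 := by rw [← h2, h1]; push_cast; ring
      rw [h3]
      have hNR : (N:ℝ) ≤ R := Int.floor_le R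
      have h4 : 2*(N:ℝ)+1 ≤ 3*R := by nlinarith
      calc (2*(N:ℝ)+1)^3 ≤ (3*R)^3 := by
            apply pow_le_pow_left₀ (by nlinarith) h4
        _ = 27 * R^3 := by ring
    calc (T.card : ℝ≥0∞) = ENNReal.ofReal ((T.card : ℕ) : ℝ) := by
          rw [ENNReal.ofReal_natCast]
      _ ≤ ENNReal.ofReal (27 * R^3) := ENNReal.ofReal_le_ofReal hcr
  calc _ ≤ ∑ _k ∈ T, (1:ℝ≥0∞) := hle1
    _ = (T.card : ℝ≥0∞) := by simp
    _ ≤ _ := hcard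

noncomputable def nE (k : Z3) : ℝ≥0∞ := ENNReal.ofReal (knorm k)
noncomputable def wE (k : Z3) : ℝ≥0∞ := if k = 0 then 0 else nE k ^ (-(3:ℝ)/2)

lemma nE_props {k : Z3} (hk : k ≠ 0) : 1 ≤ nE k ∧ nE k ≠ 0 ∧ nE k ≠ ⊤ := by
  refine ⟨?_, ?_, ENNReal.ofReal_ne_top⟩
  · rw [nE, show (1:ℝ≥0∞) = ENNReal.ofReal 1 by simp]
    exact ENNReal.ofReal_le_ofReal (one_le_knorm hk)
  · rw [nE]
    simp only [ne_eq, ENNReal.ofReal_eq_zero, not_le]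
    linarith [one_le_knorm hk]

section main
variable (aE : Z3 → ℝ≥0∞)

noncomputable def bE' (k : Z3) : ℝ≥0∞ := nE k ^ ((3:ℝ)/2) * aE k

lemma haw (h0 : aE 0 = 0) (k : Z3) : aE k = bE' aE k * wE k := by
  by_cases hk : k = 0
  · subst hk; simp [wE, h0]
  · obtain ⟨h1, hne, htop⟩ := nE_props hk
    rw [bE', wE, if_neg hk]
    have h2 : nE k ^ ((3:ℝ)/2) * aE k * nE k ^ (-(3:ℝ)/2)
        = (nE k ^ ((3:ℝ)/2) * nE k ^ (-(3:ℝ)/2)) * aE k := by ring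
    rw [h2, ← ENNReal.rpow_add _ _ hne htop]
    norm_num

lemma hbsq (k : Z3) : bE' aE k ^ 2 = nE k ^ (3:ℝ) * aE k ^ 2 := by
  rw [bE', mul_pow, ← ENNReal.rpow_natCast (nE k ^ ((3:ℝ)/2)) 2, ← ENNReal.rpow_mul]
  norm_num

lemma q_count (h0 : aE 0 = 0) (l : Z3) :
    ∑' k : Z3, (if knorm k ≤ knorm l then (bE' aE l * wE l)^2 else 0) ≤ 27 * bE' aE l ^2 := by
  by_cases hl : l = 0
  · subst hl
    simp [wE]
  · obtain ⟨h1, hne, htop⟩ := nE_props hl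
    have hq : ∀ k : Z3, (if knorm k ≤ knorm l then (bE' aE l * wE l)^2 else 0)
        = (bE' aE l * wE l)^2 * (if knorm k ≤ knorm l then (1:ℝ≥0∞) else 0) := by
      intro k; split <;> simp
    calc ∑' k : Z3, (if knorm k ≤ knorm l then (bE' aE l * wE l)^2 else 0)
        = (bE' aE l * wE l)^2 * ∑' k : Z3, (if knorm k ≤ knorm l then (1:ℝ≥0∞) else 0) := by
          simp_rw [hq]; rw [ENNReal.tsum_mul_left]
      _ ≤ (bE' aE l * wE l)^2 * ENNReal.ofReal (27 * knorm l ^3) :=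
          mul_le_mul_right (counting (one_le_knorm hl)) _
      _ ≤ 27 * bE' aE l ^2 := by
          have hof : ENNReal.ofReal (27 * knorm l ^3) = 27 * nE l ^ (3:ℝ) := by
            have hnd : nE l = ENNReal.ofReal (knorm l) := rfl
            rw [ENNReal.ofReal_mul (by norm_num), ENNReal.ofReal_pow (knorm_nonneg l),
              ← hnd, ← ENNReal.rpow_natCast (nE l) 3]
            norm_num
          rw [← haw aE h0 l, hof, hbsq]
          apply le_of_eq
          ring
end main

lemma max3 (x y z : ℝ) : (x ≤ z ∧ y ≤ z) ∨ (x ≤ y ∧ z ≤ y) ∨ (y ≤ x ∧ z ≤ x) := by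
  rcases le_total x y with h | h
  · rcases le_total y z with h' | h'
    · exact Or.inl ⟨h.trans h', h'⟩
    · exact Or.inr (Or.inl ⟨h, h'⟩)
  · rcases le_total x z with h' | h'
    · exact Or.inl ⟨h', h.trans h'⟩
    · exact Or.inr (Or.inr ⟨h, h'⟩)

noncomputable def e1 : Equiv.Perm (Z3 × Z3) :=
  Function.Involutive.toPerm (fun p => (p.1, -(p.1+p.2)))
    (by intro p; show (p.1, -(p.1 + -(p.1+p.2))) = p; rw [show -(p.1 + -(p.1+p.2)) = p.2 by abel])

noncomputable def e2 : Equiv.Perm (Z3 × Z3) :=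
  Function.Involutive.toPerm (fun p => (-(p.1+p.2), p.2))
    (by intro p; show (-(-(p.1+p.2) + p.2), p.2) = p; rw [show -(-(p.1+p.2) + p.2) = p.1 by abel])

lemma e1_apply (p : Z3 × Z3) : e1 p = (p.1, -(p.1+p.2)) := rfl
lemma e2_apply (p : Z3 × Z3) : e2 p = (-(p.1+p.2), p.2) := rfl

theorem triple_est (aE : Z3 → ℝ≥0∞) (h0 : aE 0 = 0) (ε : ℝ≥0∞) (hε0 : ε ≠ 0) (hεt : ε ≠ ⊤) :
    ∑' p : Z3 × Z3, aE p.1 * aE p.2 * aE (-(p.1+p.2))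
      ≤ 3 * (ε * (∑' k, aE k ^2)^2) + 81 * (ε⁻¹ * (∑' k, bE' aE k ^2)) := by
  set A := ∑' k, aE k ^ 2 with hA
  set B := ∑' k, bE' aE k ^2 with hB
  set q : Z3 → ℝ≥0∞ := fun l => (bE' aE l * wE l)^2 with hqdef
  -- the three regions
  set G : Z3 × Z3 → ℝ≥0∞ := fun p => aE p.1 * aE p.2 * aE (-(p.1+p.2)) with hG
  set H1 : Z3 × Z3 → ℝ≥0∞ := fun p =>
    if knorm p.1 ≤ knorm (-(p.1+p.2)) ∧ knorm p.2 ≤ knorm (-(p.1+p.2)) then G p else 0 with hH1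
  set H2 : Z3 × Z3 → ℝ≥0∞ := fun p =>
    if knorm p.1 ≤ knorm p.2 ∧ knorm (-(p.1+p.2)) ≤ knorm p.2 then G p else 0 with hH2
  set H3 : Z3 × Z3 → ℝ≥0∞ := fun p =>
    if knorm p.2 ≤ knorm p.1 ∧ knorm (-(p.1+p.2)) ≤ knorm p.1 then G p else 0 with hH3
  have hsplit : ∀ p, G p ≤ H1 p + H2 p + H3 p := by
    intro p
    rcases max3 (knorm p.1) (knorm p.2) (knorm (-(p.1+p.2))) with h | h | h
    · rw [hH1]; simp only [if_pos h]
      calc G p ≤ G p + H2 p := le_self_add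
        _ ≤ (G p + H2 p) + H3 p := le_self_add
    · rw [hH2]; simp only [if_pos h]
      calc G p ≤ H1 p + G p := le_add_self
        _ ≤ (H1 p + G p) + H3 p := le_self_add
    · rw [hH3]; simp only [if_pos h]
      exact le_add_self
  -- product sum identity
  have hprodsum : ∑' p : Z3 × Z3, (aE p.1 * aE p.2)^2 = A^2 := by
    calc ∑' p : Z3 × Z3, (aE p.1 * aE p.2)^2
        = ∑' (k : Z3) (l : Z3), aE k^2 * aE l^2 := by
          simp_rw [mul_pow]
          rw [ENNReal.tsum_prod']
      _ = A * A := by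
          simp_rw [ENNReal.tsum_mul_left]
          rw [ENNReal.tsum_mul_right]
      _ = A^2 := (sq A).symm
  -- counting sums
  have hC1 : ∑' p : Z3 × Z3, (if knorm p.1 ≤ knorm p.2 then q p.2 else 0) ≤ 27 * B := by
    rw [ENNReal.tsum_prod', ENNReal.tsum_comm]
    calc ∑' (l : Z3) (k : Z3), (if knorm k ≤ knorm l then q l else 0)
        ≤ ∑' (l : Z3), 27 * bE' aE l ^2 :=
          ENNReal.tsum_le_tsum (fun l => q_count aE h0 l)
      _ = 27 * B := ENNReal.tsum_mul_left
  have hC3 : ∑' p : Z3 × Z3, (if knorm p.2 ≤ knorm p.1 then q p.1 else 0) ≤ 27 * B := by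
    rw [ENNReal.tsum_prod']
    calc ∑' (k : Z3) (l : Z3), (if knorm l ≤ knorm k then q k else 0)
        ≤ ∑' (k : Z3), 27 * bE' aE k ^2 :=
          ENNReal.tsum_le_tsum (fun k => q_count aE h0 k)
      _ = 27 * B := ENNReal.tsum_mul_left
  -- region 1
  have hR1 : ∑' p, H1 p ≤ ε * A^2 + ε⁻¹ * (27 * B) := by
    have hpt : ∀ p : Z3 × Z3, H1 p ≤
        ε * (aE p.1 * aE p.2)^2 + ε⁻¹ * (if knorm p.1 ≤ knorm (-(p.1+p.2)) then q (-(p.1+p.2)) else 0) := by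
      intro p
      simp only [hH1]
      by_cases h : knorm p.1 ≤ knorm (-(p.1+p.2)) ∧ knorm p.2 ≤ knorm (-(p.1+p.2))
      · rw [if_pos h, if_pos h.1]
        have : G p = (aE p.1 * aE p.2) * (bE' aE (-(p.1+p.2)) * wE (-(p.1+p.2))) := by
          rw [hG]
          simp only
          rw [haw aE h0 (-(p.1+p.2))]
        rw [this, hqdef]
        exact ennreal_amgm _ _ _ hε0 hεt
      · rw [if_neg h]
        exact zero_le
    have hY1 : ∑' p : Z3 × Z3, (if knorm p.1 ≤ knorm (-(p.1+p.2)) then q (-(p.1+p.2)) else 0)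
        ≤ 27 * B := by
      have hre : ∑' p : Z3 × Z3, (if knorm p.1 ≤ knorm (-(p.1+p.2)) then q (-(p.1+p.2)) else 0)
          = ∑' p : Z3 × Z3, (if knorm p.1 ≤ knorm p.2 then q p.2 else 0) := by
        rw [← Equiv.tsum_eq e1 (fun p : Z3 × Z3 => (if knorm p.1 ≤ knorm (-(p.1+p.2)) then q (-(p.1+p.2)) else 0))]
        congr 1
        funext p
        rw [e1_apply]
        simp only
        rw [show -(p.1 + -(p.1+p.2)) = p.2 by abel]
      rw [hre]
      exact hC1
    calc ∑' p, H1 p ≤ ∑' p : Z3 × Z3, (ε * (aE p.1 * aE p.2)^2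
          + ε⁻¹ * (if knorm p.1 ≤ knorm (-(p.1+p.2)) then q (-(p.1+p.2)) else 0)) :=
        ENNReal.tsum_le_tsum hpt
      _ = ε * A^2 + ε⁻¹ * ∑' p : Z3 × Z3, (if knorm p.1 ≤ knorm (-(p.1+p.2)) then q (-(p.1+p.2)) else 0) := by
        rw [ENNReal.tsum_add, ENNReal.tsum_mul_left, ENNReal.tsum_mul_left, hprodsum]
      _ ≤ ε * A^2 + ε⁻¹ * (27 * B) := by
        exact add_le_add_right (mul_le_mul_right hY1 _) _
  -- region 2
  have hR2 : ∑' p, H2 p ≤ ε * A^2 + ε⁻¹ * (27 * B) := by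
    have hpt : ∀ p : Z3 × Z3, H2 p ≤
        ε * (aE p.1 * aE (-(p.1+p.2)))^2 + ε⁻¹ * (if knorm p.1 ≤ knorm p.2 then q p.2 else 0) := by
      intro p
      simp only [hH2]
      by_cases h : knorm p.1 ≤ knorm p.2 ∧ knorm (-(p.1+p.2)) ≤ knorm p.2
      · rw [if_pos h, if_pos h.1]
        have hGp : G p = (aE p.1 * aE (-(p.1+p.2))) * (bE' aE p.2 * wE p.2) := by
          rw [hG]
          simp only
          rw [haw aE h0 p.2]
          ring
        rw [hGp, hqdef]
        exact ennreal_amgm _ _ _ hε0 hεt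
      · rw [if_neg h]
        exact zero_le
    have hX2 : ∑' p : Z3 × Z3, (aE p.1 * aE (-(p.1+p.2)))^2 = A^2 := by
      rw [← Equiv.tsum_eq e1 (fun p : Z3 × Z3 => (aE p.1 * aE (-(p.1+p.2)))^2)]
      have : ∀ p : Z3 × Z3,
          (fun p : Z3 × Z3 => (aE p.1 * aE (-(p.1+p.2)))^2) (e1 p) = (aE p.1 * aE p.2)^2 := by
        intro p
        rw [e1_apply]
        simp only
        rw [show -(p.1 + -(p.1+p.2)) = p.2 by abel]
      calc ∑' p : Z3 × Z3, (fun p : Z3 × Z3 => (aE p.1 * aE (-(p.1+p.2)))^2) (e1 p)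
          = ∑' p : Z3 × Z3, (aE p.1 * aE p.2)^2 := by
            congr 1
            funext p
            exact this p
        _ = A^2 := hprodsum
    calc ∑' p, H2 p ≤ ∑' p : Z3 × Z3, (ε * (aE p.1 * aE (-(p.1+p.2)))^2
          + ε⁻¹ * (if knorm p.1 ≤ knorm p.2 then q p.2 else 0)) :=
        ENNReal.tsum_le_tsum hpt
      _ = ε * A^2 + ε⁻¹ * ∑' p : Z3 × Z3, (if knorm p.1 ≤ knorm p.2 then q p.2 else 0) := by
        rw [ENNReal.tsum_add, ENNReal.tsum_mul_left, ENNReal.tsum_mul_left, hX2]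
      _ ≤ ε * A^2 + ε⁻¹ * (27 * B) := add_le_add_right (mul_le_mul_right hC1 _) _
  -- region 3
  have hR3 : ∑' p, H3 p ≤ ε * A^2 + ε⁻¹ * (27 * B) := by
    have hpt : ∀ p : Z3 × Z3, H3 p ≤
        ε * (aE p.2 * aE (-(p.1+p.2)))^2 + ε⁻¹ * (if knorm p.2 ≤ knorm p.1 then q p.1 else 0) := by
      intro p
      simp only [hH3]
      by_cases h : knorm p.2 ≤ knorm p.1 ∧ knorm (-(p.1+p.2)) ≤ knorm p.1
      · rw [if_pos h, if_pos h.1]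
        have hGp : G p = (aE p.2 * aE (-(p.1+p.2))) * (bE' aE p.1 * wE p.1) := by
          rw [hG]
          simp only
          rw [haw aE h0 p.1]
          ring
        rw [hGp, hqdef]
        exact ennreal_amgm _ _ _ hε0 hεt
      · rw [if_neg h]
        exact zero_le
    have hprodsum' : ∑' p : Z3 × Z3, (aE p.2 * aE p.1)^2 = A^2 := by
      calc ∑' p : Z3 × Z3, (aE p.2 * aE p.1)^2
          = ∑' p : Z3 × Z3, (aE p.1 * aE p.2)^2 := by
            congr 1
            funext p
            rw [mul_comm (aE p.2) (aE p.1)]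
        _ = A^2 := hprodsum
    have hX3 : ∑' p : Z3 × Z3, (aE p.2 * aE (-(p.1+p.2)))^2 = A^2 := by
      rw [← Equiv.tsum_eq e2 (fun p : Z3 × Z3 => (aE p.2 * aE (-(p.1+p.2)))^2)]
      calc ∑' p : Z3 × Z3, (fun p : Z3 × Z3 => (aE p.2 * aE (-(p.1+p.2)))^2) (e2 p)
          = ∑' p : Z3 × Z3, (aE p.2 * aE p.1)^2 := by
            congr 1
            funext p
            rw [e2_apply]
            simp only
            rw [show -(-(p.1+p.2) + p.2) = p.1 by abel]
        _ = A^2 := hprodsum'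
    calc ∑' p, H3 p ≤ ∑' p : Z3 × Z3, (ε * (aE p.2 * aE (-(p.1+p.2)))^2
          + ε⁻¹ * (if knorm p.2 ≤ knorm p.1 then q p.1 else 0)) :=
        ENNReal.tsum_le_tsum hpt
      _ = ε * A^2 + ε⁻¹ * ∑' p : Z3 × Z3, (if knorm p.2 ≤ knorm p.1 then q p.1 else 0) := by
        rw [ENNReal.tsum_add, ENNReal.tsum_mul_left, ENNReal.tsum_mul_left, hX3]
      _ ≤ ε * A^2 + ε⁻¹ * (27 * B) := add_le_add_right (mul_le_mul_right hC3 _) _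
  calc ∑' p, G p ≤ ∑' p, (H1 p + H2 p + H3 p) := ENNReal.tsum_le_tsum hsplit
    _ = (∑' p, (H1 p + H2 p)) + ∑' p, H3 p := ENNReal.tsum_add
    _ = ((∑' p, H1 p) + ∑' p, H2 p) + ∑' p, H3 p := by rw [ENNReal.tsum_add]
    _ ≤ ((ε * A^2 + ε⁻¹ * (27 * B)) + (ε * A^2 + ε⁻¹ * (27 * B))) + (ε * A^2 + ε⁻¹ * (27 * B)) :=
        add_le_add (add_le_add hR1 hR2) hR3
    _ = 3 * (ε * A^2) + 81 * (ε⁻¹ * B) := by ring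


theorem stmt0 :
    ∃ c > (0:ℝ), ∀ u : Z3 → C3, DivFree u → MeanZero u →
      Summable (fun k : Z3 => (knorm k) ^ (2*(3/2:ℝ)) * (∑ i, ‖u k i‖ ^ 2)) →
      ‖Phi u‖ ≤ c * sobNorm (3/2) u := by
  refine ⟨500, by norm_num, ?_⟩
  intro u _hdiv hmz hsum
  have hs0 : 0 ≤ sobNorm (3/2) u := Real.sqrt_nonneg _
  by_cases hD : sobNormSq 0 u = 0
  · rw [Phi, if_pos hD, norm_zero]
    positivity
  · -- notation
    have hu0 : u 0 = 0 := hmz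
    have ha0 : anorm u 0 = 0 := by simp [anorm, hu0]
    set a : Z3 → ℝ≥0∞ := fun k => ENNReal.ofReal (anorm u k) with haE
    have haE0 : a 0 = 0 := by rw [haE]; simp [ha0]
    set g0 : Z3 → ℝ := fun k => ∑ i, ‖u k i‖ ^ 2 with hg0
    have hg0nn : ∀ k, 0 ≤ g0 k := fun k => Finset.sum_nonneg fun i _ => sq_nonneg _
    have hDg : sobNormSq 0 u = ∑' k, g0 k := by
      rw [sobNormSq]
      congr 1
      funext k
      norm_num
      rfl
    have hone_le_w : ∀ k : Z3, k ≠ 0 → 1 ≤ knorm k ^ (2*(3/2:ℝ)) := by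
      intro k hk
      apply Real.one_le_rpow (one_le_knorm hk) (by norm_num)
    have hg0_le : ∀ k, g0 k ≤ knorm k ^ (2*(3/2:ℝ)) * g0 k := by
      intro k
      by_cases hk : k = 0
      · subst hk
        simp [hg0, hu0]
      · exact le_mul_of_one_le_left (hg0nn k) (hone_le_w k hk)
    have hg0sum : Summable g0 := Summable.of_nonneg_of_le hg0nn hg0_le hsum
    have hD0 : 0 ≤ sobNormSq 0 u := by
      rw [hDg]; exact tsum_nonneg hg0nn
    have hDpos : 0 < sobNormSq 0 u := lt_of_le_of_ne hD0 (Ne.symm hD)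
    have hSB0 : 0 ≤ sobNormSq (3/2) u := by
      rw [sobNormSq]
      apply tsum_nonneg
      intro k
      apply mul_nonneg (Real.rpow_nonneg (knorm_nonneg k) _)
      exact Finset.sum_nonneg fun i _ => sq_nonneg _
    -- comparisons between g0 and anorm²
    have hg0_le_an : ∀ k, g0 k ≤ (anorm u k)^2 := by
      intro k
      rw [hg0, anorm]
      simp only [Fin.sum_univ_three]
      have h0 := norm_nonneg (u k 0)
      have h1 := norm_nonneg (u k 1)
      have h2 := norm_nonneg (u k 2)
      nlinarith [mul_nonneg h0 h1, mul_nonneg h0 h2, mul_nonneg h1 h2]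
    have han_le_3g0 : ∀ k, (anorm u k)^2 ≤ 3 * g0 k := by
      intro k
      rw [hg0, anorm]
      simp only [Fin.sum_univ_three]
      nlinarith [sq_nonneg (‖u k 0‖ - ‖u k 1‖),
        sq_nonneg (‖u k 0‖ - ‖u k 2‖),
        sq_nonneg (‖u k 1‖ - ‖u k 2‖)]
    set A := ∑' k, a k ^ 2 with hA
    set B := ∑' k, bE' a k ^ 2 with hB
    have hA_up : A ≤ ENNReal.ofReal (3 * sobNormSq 0 u) := by
      calc A ≤ ∑' k, ENNReal.ofReal (3 * g0 k) := by
            apply ENNReal.tsum_le_tsum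
            intro k
            rw [haE]
            simp only
            rw [← ENNReal.ofReal_pow (anorm_nonneg u k)]
            exact ENNReal.ofReal_le_ofReal (han_le_3g0 k)
        _ = ENNReal.ofReal (∑' k, 3 * g0 k) :=
            (ENNReal.ofReal_tsum_of_nonneg (fun k => by have := hg0nn k; positivity)
              (hg0sum.mul_left 3)).symm
        _ = ENNReal.ofReal (3 * sobNormSq 0 u) := by rw [hDg, tsum_mul_left]
    have hD_le_A : ENNReal.ofReal (sobNormSq 0 u) ≤ A := by
      rw [hDg, ENNReal.ofReal_tsum_of_nonneg hg0nn hg0sum]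
      apply ENNReal.tsum_le_tsum
      intro k
      rw [haE]
      simp only
      rw [← ENNReal.ofReal_pow (anorm_nonneg u k)]
      exact ENNReal.ofReal_le_ofReal (hg0_le_an k)
    have hB_up : B ≤ ENNReal.ofReal (3 * sobNormSq (3/2) u) := by
      calc B ≤ ∑' k, ENNReal.ofReal (3 * (knorm k ^ (2*(3/2:ℝ)) * g0 k)) := by
            apply ENNReal.tsum_le_tsum
            intro k
            rw [hbsq]
            have hnk : nE k ^ (3:ℝ) = ENNReal.ofReal (knorm k ^ (3:ℝ)) :=
              ENNReal.ofReal_rpow_of_nonneg (knorm_nonneg k) (by norm_num)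
            rw [hnk, haE]
            simp only
            rw [← ENNReal.ofReal_pow (anorm_nonneg u k),
              ← ENNReal.ofReal_mul (Real.rpow_nonneg (knorm_nonneg k) _)]
            apply ENNReal.ofReal_le_ofReal
            have he : (2*(3/2:ℝ)) = (3:ℝ) := by norm_num
            rw [he]
            have h3 := Real.rpow_nonneg (knorm_nonneg k) (3:ℝ)
            nlinarith [han_le_3g0 k, mul_le_mul_of_nonneg_left (han_le_3g0 k) h3]
        _ = ENNReal.ofReal (∑' k, 3 * (knorm k ^ (2*(3/2:ℝ)) * g0 k)) :=
            (ENNReal.ofReal_tsum_of_nonneg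
              (fun k => by
                have := hg0nn k
                have := Real.rpow_nonneg (knorm_nonneg k) (2*(3/2:ℝ))
                positivity)
              (hsum.mul_left 3)).symm
        _ = ENNReal.ofReal (3 * sobNormSq (3/2) u) := by
            congr 1
            rw [sobNormSq, tsum_mul_left]
    have hAtop : A ≠ ⊤ := ne_top_of_le_ne_top ENNReal.ofReal_ne_top hA_up
    have hBtop : B ≠ ⊤ := ne_top_of_le_ne_top ENNReal.ofReal_ne_top hB_up
    have hApos : 0 < A := lt_of_lt_of_le (ENNReal.ofReal_pos.2 hDpos) hD_le_A
    have hAB : A ≤ B := by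
      apply ENNReal.tsum_le_tsum
      intro k
      by_cases hk : k = 0
      · subst hk
        rw [haE0]
        simp
      · have h1 : a k ≤ bE' a k := by
          rw [bE']
          apply le_mul_of_one_le_left (zero_le)
          calc (1:ℝ≥0∞) = 1 ^ ((3:ℝ)/2) := (ENNReal.one_rpow _).symm
            _ ≤ nE k ^ ((3:ℝ)/2) := ENNReal.rpow_le_rpow (nE_props hk).1 (by norm_num)
        exact pow_le_pow_left' h1 2
    have hBpos : 0 < B := lt_of_lt_of_le hApos hAB
    set Ar := A.toReal with hAr
    set Br := B.toReal with hBr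
    have hArpos : 0 < Ar := ENNReal.toReal_pos hApos.ne' hAtop
    have hBrpos : 0 < Br := ENNReal.toReal_pos hBpos.ne' hBtop
    set t := Real.sqrt Br with ht
    have htpos : 0 < t := Real.sqrt_pos.2 hBrpos
    set ε := ENNReal.ofReal (t / Ar) with hεdef
    have hε0 : ε ≠ 0 := (ENNReal.ofReal_pos.2 (div_pos htpos hArpos)).ne'
    have hεtop : ε ≠ ⊤ := ENNReal.ofReal_ne_top
    have hmain := triple_est a haE0 ε hε0 hεtop
    have hAeq : A = ENNReal.ofReal Ar := (ENNReal.ofReal_toReal hAtop).symm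
    have hBeq : B = ENNReal.ofReal Br := (ENNReal.ofReal_toReal hBtop).symm
    have hεinv : ε⁻¹ = ENNReal.ofReal (Ar / t) := by
      rw [hεdef, ← ENNReal.ofReal_inv_of_pos (div_pos htpos hArpos), inv_div]
    have hRHS : 3*(ε*A^2) + 81*(ε⁻¹*B) = ENNReal.ofReal (84 * Ar * t) := by
      rw [hAeq, hBeq, hεdef, hεinv]
      rw [← ENNReal.ofReal_pow hArpos.le,
        ← ENNReal.ofReal_mul (by positivity),
        ← ENNReal.ofReal_mul (by positivity),
        show (3:ℝ≥0∞) = ENNReal.ofReal 3 by norm_num,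
        show (81:ℝ≥0∞) = ENNReal.ofReal 81 by norm_num,
        ← ENNReal.ofReal_mul (by norm_num),
        ← ENNReal.ofReal_mul (by norm_num),
        ← ENNReal.ofReal_add (by positivity) (by positivity)]
      congr 1
      have hBt : Br = t * t := (Real.mul_self_sqrt hBrpos.le).symm
      rw [hBt]
      field_simp
      ring
    -- the summand of Psi
    set f : Z3 × Z3 → ℂ := fun p =>
      (∑ i, u p.1 i * (Complex.I * ((p.2 i : ℤ) : ℂ))) *
      (∑ i, curlInv u p.2 i * u (-(p.1 + p.2)) i) with hf
    have hfb : ∀ p : Z3 × Z3, (‖f p‖₊ : ℝ≥0∞) ≤ a p.1 * a p.2 * a (-(p.1+p.2)) := by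
      intro p
      rw [← enorm_eq_nnnorm, ← ofReal_norm, haE]
      simp only
      rw [← ENNReal.ofReal_mul (anorm_nonneg u p.1),
        ← ENNReal.ofReal_mul (mul_nonneg (anorm_nonneg u p.1) (anorm_nonneg u p.2))]
      apply ENNReal.ofReal_le_ofReal
      rw [hf]
      simp only
      exact term_bound u p
    have hfsumE : ∑' p : Z3 × Z3, (‖f p‖₊ : ℝ≥0∞) ≤ ENNReal.ofReal (84 * Ar * t) :=
      le_trans (ENNReal.tsum_le_tsum hfb) (hmain.trans_eq hRHS)
    have hfne : ∑' p : Z3 × Z3, (‖f p‖₊ : ℝ≥0∞) ≠ ⊤ :=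
      ne_top_of_le_ne_top ENNReal.ofReal_ne_top hfsumE
    have hsnn : Summable (fun p => ‖f p‖₊) := ENNReal.tsum_coe_ne_top_iff_summable.1 hfne
    have hsn : Summable (fun p => ‖f p‖) := by
      have := NNReal.summable_coe.2 hsnn
      simpa using this
    have hsf : Summable f := Summable.of_norm hsn
    have htsum_norm : ∑' p, ‖f p‖ ≤ 84 * Ar * t := by
      have h1 : (↑(∑' p, ‖f p‖₊) : ℝ≥0∞) ≤ ENNReal.ofReal (84 * Ar * t) := by
        rw [ENNReal.coe_tsum hsnn]
        exact hfsumE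
      have h2 := ENNReal.toReal_le_of_le_ofReal (by positivity) h1
      rw [ENNReal.coe_toReal, NNReal.coe_tsum] at h2
      simpa using h2
    have hS : ‖∑' p, f p‖ ≤ 84 * Ar * t := by
      exact le_trans (norm_tsum_le_tsum_norm hsn) htsum_norm
    -- Phi expansion
    have hpow_pos : (0:ℝ) < (2*Real.pi)^3 := by positivity
    have hPhiAbs : ‖Phi u‖
        = ‖Psi u u u‖ / ((2*Real.pi)^3 * sobNormSq 0 u) := by
      rw [Phi, if_neg hD, norm_div, Complex.norm_real, Real.norm_eq_abs,
        abs_of_pos (mul_pos hpow_pos hDpos)]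
    have hPsiAbs : ‖Psi u u u‖ = (2*Real.pi)^3 * ‖∑' p, f p‖ := by
      rw [Psi, norm_mul]
      congr 1
      rw [norm_pow, norm_mul, Complex.norm_two, Complex.norm_real, Real.norm_eq_abs, abs_of_pos Real.pi_pos]
    set SS : ℝ := ‖∑' p, f p‖ with hSSdef
    rw [hPhiAbs, hPsiAbs, mul_div_assoc]
    -- final chain
    have hAr3D : Ar ≤ 3 * sobNormSq 0 u :=
      ENNReal.toReal_le_of_le_ofReal (by linarith) hA_up
    have ht_le : t ≤ Real.sqrt 3 * sobNorm (3/2) u := by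
      have hBr3 : Br ≤ 3 * sobNormSq (3/2) u :=
        ENNReal.toReal_le_of_le_ofReal (by linarith) hB_up
      calc t ≤ Real.sqrt (3 * sobNormSq (3/2) u) := Real.sqrt_le_sqrt hBr3
        _ = Real.sqrt 3 * sobNorm (3/2) u := by rw [Real.sqrt_mul (by norm_num), sobNorm]
    have hsqrt3 : Real.sqrt 3 ≤ 7/4 := by
      rw [show (7/4:ℝ) = Real.sqrt ((7/4)^2) by rw [Real.sqrt_sq (by norm_num)]]
      apply Real.sqrt_le_sqrt
      norm_num
    have hfinal : 84 * Ar * t ≤ 500 * sobNorm (3/2) u * sobNormSq 0 u := by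
      have h1 : Ar * t ≤ (3 * sobNormSq 0 u) * (Real.sqrt 3 * sobNorm (3/2) u) :=
        mul_le_mul hAr3D ht_le htpos.le (by linarith)
      have h2 : Real.sqrt 3 * sobNorm (3/2) u ≤ (7/4) * sobNorm (3/2) u :=
        mul_le_mul_of_nonneg_right hsqrt3 hs0
      have hsD : 0 ≤ sobNorm (3/2) u * sobNormSq 0 u := mul_nonneg hs0 hDpos.le
      calc 84 * Ar * t = 84 * (Ar * t) := by ring
        _ ≤ 84 * ((3 * sobNormSq 0 u) * (Real.sqrt 3 * sobNorm (3/2) u)) :=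
            mul_le_mul_of_nonneg_left h1 (by norm_num)
        _ ≤ 84 * ((3 * sobNormSq 0 u) * ((7/4) * sobNorm (3/2) u)) := by
            apply mul_le_mul_of_nonneg_left
              (mul_le_mul_of_nonneg_left h2 (by linarith)) (by norm_num)
        _ = 441 * (sobNorm (3/2) u * sobNormSq 0 u) := by ring
        _ ≤ 500 * (sobNorm (3/2) u * sobNormSq 0 u) := by linarith
        _ = 500 * sobNorm (3/2) u * sobNormSq 0 u := by ring
    calc (2*Real.pi)^3 * (SS / ((2*Real.pi)^3 * sobNormSq 0 u)) =
        SS / sobNormSq 0 u := by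
          rw [← mul_div_assoc, mul_div_mul_left _ _ hpow_pos.ne']
      _ ≤ (84 * Ar * t) / sobNormSq 0 u := (div_le_div_iff_of_pos_right hDpos).2 hS
      _ ≤ 500 * sobNorm (3/2) u := by
          rw [div_le_iff₀ hDpos]
          exact hfinal
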